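/- Let Y = Q(v) with the pmf p_Q(y|v) = e^ε/Ω if ⟨y,v⟩ = 1 else 1/Ω, where v is a signed unit vector. Then E[Y | v] = p(1 − e^{−ε}) · v, where p = (1/Ω)·C(d−1, m−1)·2^{m−1}·e^ε. -/

import Mathlib

open Finset

/-- The output space `𝒴`: vectors in `{-1,0,1}^d` with exactly `m` nonzero entries. -/
def outputSet (d m : ℕ) : Finset (Fin d → ℤ) :=
  (Fintype.piFinset fun _ : Fin d => ({-1, 0, 1} : Finset ℤ)).filter
    (fun y => (Finset.univ.filter fun i => y i ≠ 0).card = m)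

/-- `v` is a signed unit vector: exactly one nonzero entry, which is `1` or `-1`. -/
def IsSignedUnit {d : ℕ} (v : Fin d → ℤ) : Prop :=
  ∃ k : Fin d, (v k = 1 ∨ v k = -1) ∧ ∀ i, i ≠ k → v i = 0

/-- The pmf of the randomizer: `p_Q(y|v) = e^ε/Ω` if `⟨y,v⟩ = 1` and `1/Ω` otherwise. -/
noncomputable def pQ (d : ℕ) (ε Ω : ℝ) (v y : Fin d → ℤ) : ℝ :=
  if (∑ i, y i * v i) = 1 then Real.exp ε / Ω else 1 / Ω

/-- The normalizing constant `Ω`. -/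
noncomputable def Ωval (d m : ℕ) (ε : ℝ) : ℝ :=
  ((d - 1).choose (m - 1) : ℝ) * 2 ^ (m - 1) * Real.exp ε
    + ((d - 1).choose (m - 1) : ℝ) * 2 ^ (m - 1) + ((d - 1).choose m : ℝ) * 2 ^ m

lemma count_pinned (d m : ℕ) (hm1 : 1 ≤ m) (j : Fin d) (c : ℤ) (hc : c = 1 ∨ c = -1) :
    ((outputSet d m).filter fun y => y j = c).card = (d - 1).choose (m - 1) * 2 ^ (m - 1) := by
  classical
  have hc0 : c ≠ 0 := by rcases hc with h | h <;> simp [h]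
  set S := (outputSet d m).filter fun y => y j = c with hS
  set T := (Finset.powersetCard m (univ : Finset (Fin d))).filter (fun A => j ∈ A) with hT
  have hmap : ∀ y ∈ S, (univ.filter fun i => y i ≠ 0) ∈ T := by
    intro y hy
    simp only [hS, outputSet, mem_filter, Fintype.mem_piFinset] at hy
    obtain ⟨⟨hy1, hy2⟩, hy3⟩ := hy
    simp only [hT, mem_filter, mem_powersetCard]
    exact ⟨⟨subset_univ _, hy2⟩, by simp [hy3, hc0]⟩
  rw [card_eq_sum_card_fiberwise hmap]
  have hfiber : ∀ A ∈ T,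
      (S.filter fun y => (univ.filter fun i => y i ≠ 0) = A).card = 2 ^ (m - 1) := by
    intro A hA
    simp only [hT, mem_filter, mem_powersetCard] at hA
    obtain ⟨⟨-, hAcard⟩, hjA⟩ := hA
    have key : (S.filter fun y => (univ.filter fun i => y i ≠ 0) = A)
        = Fintype.piFinset (fun i => if i = j then ({c} : Finset ℤ)
            else if i ∈ A then ({-1, 1} : Finset ℤ) else {0}) := by
      ext y
      simp only [hS, outputSet, mem_filter, Fintype.mem_piFinset]
      constructor
      · rintro ⟨⟨⟨h1, h2⟩, h3⟩, h4⟩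
        have hsupp : ∀ i, i ∈ A ↔ y i ≠ 0 := by intro i; rw [← h4]; simp
        intro i
        by_cases hij : i = j
        · simp [hij, h3]
        · rw [if_neg hij]
          by_cases hiA : i ∈ A
          · rw [if_pos hiA]
            have hne : y i ≠ 0 := (hsupp i).1 hiA
            have h := h1 i
            simp only [mem_insert, mem_singleton] at h ⊢
            rcases h with h | h | h
            · exact Or.inl h
            · exact absurd h hne
            · exact Or.inr h
          · rw [if_neg hiA]
            have hz : y i = 0 := not_not.1 (fun h => hiA ((hsupp i).2 h))
            simp [hz]
      · intro hy
        have h3 : y j = c := by have := hy j; simpa using this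
        have h1 : ∀ i, y i ∈ ({-1, 0, 1} : Finset ℤ) := by
          intro i
          have := hy i
          by_cases hij : i = j
          · subst hij; rw [if_pos rfl] at this; simp only [mem_singleton] at this
            rcases hc with h | h <;> simp [this, h]
          · rw [if_neg hij] at this
            by_cases hiA : i ∈ A
            · rw [if_pos hiA] at this; simp only [mem_insert, mem_singleton] at this ⊢
              tauto
            · rw [if_neg hiA] at this; simp only [mem_singleton] at this; simp [this]
        have hsuppA : (univ.filter fun i => y i ≠ 0) = A := by
          ext i
          simp only [mem_filter, mem_univ, true_and]
          have := hy i
          by_cases hij : i = j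
          · subst hij
            simp [h3, hc0, hjA]
          · rw [if_neg hij] at this
            by_cases hiA : i ∈ A
            · rw [if_pos hiA] at this
              simp only [mem_insert, mem_singleton] at this
              constructor
              · intro _; exact hiA
              · intro _; rcases this with h | h <;> simp [h]
            · rw [if_neg hiA] at this; simp only [mem_singleton] at this
              simp [this, hiA]
        exact ⟨⟨⟨h1, by rw [hsuppA, hAcard]⟩, h3⟩, hsuppA⟩
    rw [key, Fintype.card_piFinset]
    have hcards : ∀ i : Fin d,
        ((if i = j then ({c} : Finset ℤ) else if i ∈ A then ({-1, 1} : Finset ℤ) else {0}).card)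
          = if i ∈ A.erase j then 2 else 1 := by
      intro i
      by_cases hij : i = j
      · simp [hij]
      · by_cases hiA : i ∈ A <;> simp [hij, hiA]
    rw [Finset.prod_congr rfl (fun i _ => hcards i)]
    rw [Finset.prod_ite_mem, univ_inter, Finset.prod_const,
      Finset.card_erase_of_mem hjA, hAcard]
  rw [Finset.sum_congr rfl hfiber, Finset.sum_const, smul_eq_mul]
  congr 1
  have : T.card = (Finset.powersetCard (m - 1) ((univ : Finset (Fin d)).erase j)).card := by
    refine Finset.card_bij' (fun A _ => A.erase j) (fun B _ => insert j B) ?hi ?hj ?li ?ri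
    case hi =>
      intro A hA
      simp only [hT, mem_filter, mem_powersetCard] at hA
      obtain ⟨⟨-, hAcard⟩, hjA⟩ := hA
      rw [mem_powersetCard]
      exact ⟨erase_subset_erase _ (subset_univ _), by rw [card_erase_of_mem hjA, hAcard]⟩
    case hj =>
      intro B hB
      rw [mem_powersetCard] at hB
      obtain ⟨hBsub, hBcard⟩ := hB
      have hjB : j ∉ B := fun h => by simpa using hBsub h
      simp only [hT, mem_filter, mem_powersetCard]
      refine ⟨⟨subset_univ _, ?_⟩, mem_insert_self _ _⟩
      rw [card_insert_of_notMem hjB, hBcard]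
      omega
    case li =>
      intro A hA
      simp only [hT, mem_filter] at hA
      exact insert_erase hA.2
    case ri =>
      intro B hB
      rw [mem_powersetCard] at hB
      exact erase_insert (fun h => by simpa using hB.1 h)
  rw [this, Finset.card_powersetCard, card_erase_of_mem (mem_univ j), card_univ,
    Fintype.card_fin]

lemma sum_zero_coord (d m : ℕ) (ε Ω : ℝ) (v : Fin d → ℤ) (k : Fin d) (hvk : v k = 0) :
    (∑ y ∈ outputSet d m, pQ d ε Ω v y * (y k : ℝ)) = 0 := by
  classical
  apply Finset.sum_involution (g := fun y _ => Function.update y k (-(y k)))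
  · intro y hy
    have hpq : pQ d ε Ω v (Function.update y k (-(y k))) = pQ d ε Ω v y := by
      unfold pQ
      congr 1
      · congr 1
        apply Finset.sum_congr rfl
        intro i _
        by_cases hik : i = k
        · subst hik; rw [hvk]; ring
        · rw [Function.update_of_ne hik]
    rw [hpq, Function.update_self]
    push_cast
    ring
  · intro y hy hne
    have hyk : y k ≠ 0 := by
      intro h; apply hne; rw [h]; simp
    intro h
    have := congrFun h k
    rw [Function.update_self] at this
    omega
  · intro y hy
    simp [Function.update_self, Function.update_idem, Function.update_eq_self]
  · intro y hy
    simp only [outputSet, mem_filter, Fintype.mem_piFinset] at hy ⊢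
    obtain ⟨h1, h2⟩ := hy
    constructor
    · intro i
      by_cases hik : i = k
      · rw [hik, Function.update_self]
        have h := h1 k
        simp only [mem_insert, mem_singleton] at h ⊢
        omega
      · rw [Function.update_of_ne hik]; exact h1 i
    · rw [← h2]
      congr 1
      apply Finset.filter_congr
      intro i _
      by_cases hik : i = k
      · rw [hik, Function.update_self]; simp
      · rw [Function.update_of_ne hik]

/-- The expectation of the randomizer output is `E[Y | v] = p(1 - e^{-ε})·v`, where
`p = (1/Ω)·C(d-1,m-1)·2^{m-1}·e^ε`. -/
theorem expectation_pQ (d m : ℕ) (hd : 1 ≤ d) (hm1 : 1 ≤ m) (hmd : m ≤ d)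
    (ε : ℝ) (hε : 0 < ε) (v : Fin d → ℤ) (hv : IsSignedUnit v) (k : Fin d) :
    (∑ y ∈ outputSet d m, pQ d ε (Ωval d m ε) v y * (y k : ℝ))
      = ((1 / Ωval d m ε) * ((d - 1).choose (m - 1) : ℝ) * 2 ^ (m - 1) * Real.exp ε)
          * (1 - Real.exp (-ε)) * (v k : ℝ) := by
  classical
  obtain ⟨j, hvj, hvz⟩ := hv
  by_cases hkj : k = j
  · subst hkj
    have hpq : ∀ y ∈ outputSet d m,
        pQ d ε (Ωval d m ε) v y
          = if y k = v k then Real.exp ε / Ωval d m ε else 1 / Ωval d m ε := by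
      intro y hy
      unfold pQ
      have hsum : (∑ i, y i * v i) = y k * v k := by
        apply Finset.sum_eq_single k
        · intro i _ hik; rw [hvz i hik]; ring
        · intro h; exact absurd (mem_univ k) h
      rw [hsum]
      have hiff : (y k * v k = 1) ↔ (y k = v k) := by
        rcases hvj with h | h <;> rw [h] <;> omega
      simp only [hiff]
    rw [Finset.sum_congr rfl (fun y hy => by rw [hpq y hy])]
    rw [← Finset.sum_filter_add_sum_filter_not (outputSet d m) (fun y => y k = v k)]
    have hvne : ∀ z : ℤ, z = v k → z = -v k → False := by
      intro z h1 h2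
      rcases hvj with h | h <;> rw [h] at h1 h2 <;> omega
    have e1 : (∑ y ∈ (outputSet d m).filter (fun y => y k = v k),
        (if y k = v k then Real.exp ε / Ωval d m ε else 1 / Ωval d m ε) * (y k : ℝ))
        = ((d - 1).choose (m - 1) * 2 ^ (m - 1) : ℕ)
            * (Real.exp ε / Ωval d m ε * (v k : ℝ)) := by
      rw [Finset.sum_congr rfl (g := fun _ => Real.exp ε / Ωval d m ε * (v k : ℝ))
        (fun y hy => by
          rw [mem_filter] at hy
          rw [if_pos hy.2, hy.2]),
        Finset.sum_const, nsmul_eq_mul, count_pinned d m hm1 k (v k) hvj]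
    have e2 : (∑ y ∈ (outputSet d m).filter (fun y => ¬ y k = v k),
        (if y k = v k then Real.exp ε / Ωval d m ε else 1 / Ωval d m ε) * (y k : ℝ))
        = ((d - 1).choose (m - 1) * 2 ^ (m - 1) : ℕ)
            * (1 / Ωval d m ε * (-(v k : ℝ))) := by
      rw [← Finset.sum_filter_add_sum_filter_not
        ((outputSet d m).filter (fun y => ¬ y k = v k)) (fun y => y k = -v k)]
      have ha : ((outputSet d m).filter (fun y => ¬ y k = v k)).filter (fun y => y k = -v k)
          = (outputSet d m).filter (fun y => y k = -v k) := by
        rw [Finset.filter_filter]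
        apply Finset.filter_congr
        intro y _
        constructor
        · exact fun h => h.2
        · intro h; exact ⟨fun hh => hvne (y k) hh h, h⟩
      have hb : (∑ y ∈ (outputSet d m).filter (fun y => y k = -v k),
          (if y k = v k then Real.exp ε / Ωval d m ε else 1 / Ωval d m ε) * (y k : ℝ))
          = ((d - 1).choose (m - 1) * 2 ^ (m - 1) : ℕ)
              * (1 / Ωval d m ε * (-(v k : ℝ))) := by
        rw [Finset.sum_congr rfl (g := fun _ => 1 / Ωval d m ε * (-(v k : ℝ)))
          (fun y hy => by
            rw [mem_filter] at hy
            rw [if_neg (fun hh => hvne (y k) hh hy.2), hy.2]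
            push_cast
            ring),
          Finset.sum_const, nsmul_eq_mul,
          count_pinned d m hm1 k (-v k) (by rcases hvj with h | h <;> simp [h])]
      have hcz : (∑ y ∈ ((outputSet d m).filter (fun y => ¬ y k = v k)).filter
          (fun y => ¬ y k = -v k),
          (if y k = v k then Real.exp ε / Ωval d m ε else 1 / Ωval d m ε) * (y k : ℝ)) = 0 := by
        apply Finset.sum_eq_zero
        intro y hy
        simp only [mem_filter, outputSet, Fintype.mem_piFinset] at hy
        obtain ⟨⟨⟨h1, -⟩, h2⟩, h3⟩ := hy
        have h4 := h1 k
        simp only [mem_insert, mem_singleton] at h4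
        have hyk : y k = 0 := by
          rcases hvj with h | h <;> rw [h] at h2 h3 <;> omega
        rw [hyk]
        simp
      rw [ha, hb, hcz, add_zero]
    rw [e1, e2]
    have hee : Real.exp ε * Real.exp (-ε) = 1 := by
      rw [← Real.exp_add]; simp
    push_cast
    linear_combination (((d - 1).choose (m - 1) : ℝ) * 2 ^ (m - 1) * (v k : ℝ)
      / Ωval d m ε) * hee
  · have hvk : v k = 0 := hvz k hkj
    rw [sum_zero_coord d m ε (Ωval d m ε) v k hvk, hvk]
    simp
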